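/- Let u, v, w be linearly independent unit vectors in EuclideanSpace ℝ (Fin 3), and set a = angle(v,w), b = angle(w,u), c = angle(u,v) and α = angle(v − ⟨v,u⟩u, w − ⟨w,u⟩u) (the spherical vertex angle at u). Then the spherical law of cosines holds: cos a = cos b · cos c + sin b · sin c · cos α. (By symmetry the analogous identities hold at the vertices v and w.) -/

import Mathlib

open Real InnerProductGeometry

/-- the spherical law of cosines. If `u, v, w` are linearly independent
unit vectors in `ℝ³`, with spherical side lengths `a = angle(v,w)`, `b = angle(w,u)`,
`c = angle(u,v)` and spherical vertex angle at `u` given by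
`α = angle(v − ⟨v,u⟩u, w − ⟨w,u⟩u)`, then `cos a = cos b · cos c + sin b · sin c · cos α`. -/
theorem stmt_3 (u v w : EuclideanSpace ℝ (Fin 3))
    (hu : ‖u‖ = 1) (hv : ‖v‖ = 1) (hw : ‖w‖ = 1)
    (hli : LinearIndependent ℝ ![u, v, w]) :
    Real.cos (InnerProductGeometry.angle v w) =
      Real.cos (InnerProductGeometry.angle w u) * Real.cos (InnerProductGeometry.angle u v) +
      Real.sin (InnerProductGeometry.angle w u) * Real.sin (InnerProductGeometry.angle u v) *
        Real.cos (InnerProductGeometry.angle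
          (v - (inner ℝ v u : ℝ) • u) (w - (inner ℝ w u : ℝ) • u)) := by
  set p := v - (inner ℝ v u : ℝ) • u with hp_def
  set q := w - (inner ℝ w u : ℝ) • u with hq_def
  rw [Fintype.linearIndependent_iff] at hli
  have hp0 : p ≠ 0 := by
    intro h
    have := hli ![(inner ℝ v u : ℝ), -1, 0] ?_ 1
    · norm_num at this
    · simp only [Fin.sum_univ_three, Matrix.cons_val_zero, Matrix.cons_val_one, Matrix.head_cons,
        Matrix.cons_val_two, Matrix.tail_cons]
      have : -p = 0 := by rw [h]; simp
      rw [hp_def] at this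
      linear_combination (norm := module) this
  have hq0 : q ≠ 0 := by
    intro h
    have := hli ![(inner ℝ w u : ℝ), 0, -1] ?_ 2
    · norm_num [Matrix.cons_val_two, Matrix.tail_cons, Matrix.head_cons] at this
    · simp only [Fin.sum_univ_three, Matrix.cons_val_zero, Matrix.cons_val_one, Matrix.head_cons,
        Matrix.cons_val_two, Matrix.tail_cons]
      have : -q = 0 := by rw [h]; simp
      rw [hq_def] at this
      linear_combination (norm := module) this
  have hip : (inner ℝ p q : ℝ) = inner ℝ v w - (inner ℝ v u : ℝ) * (inner ℝ w u : ℝ) := by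
    simp only [hp_def, hq_def, inner_sub_left, inner_sub_right, real_inner_smul_left,
      real_inner_smul_right, real_inner_self_eq_norm_sq, hu]
    rw [real_inner_comm u w]
    ring
  have hnp : ‖p‖ ^ 2 = 1 - (inner ℝ v u : ℝ) ^ 2 := by
    rw [← real_inner_self_eq_norm_sq]
    simp only [hp_def, inner_sub_left, inner_sub_right, real_inner_smul_left,
      real_inner_smul_right, real_inner_self_eq_norm_sq, hu, hv]
    rw [real_inner_comm u v, norm_smul, hu, mul_one, Real.norm_eq_abs, sq_abs]
    ring
  have hnq : ‖q‖ ^ 2 = 1 - (inner ℝ w u : ℝ) ^ 2 := by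
    rw [← real_inner_self_eq_norm_sq]
    simp only [hq_def, inner_sub_left, inner_sub_right, real_inner_smul_left,
      real_inner_smul_right, real_inner_self_eq_norm_sq, hu, hw]
    rw [real_inner_comm u w, norm_smul, hu, mul_one, Real.norm_eq_abs, sq_abs]
    ring
  have hsc : Real.sin (InnerProductGeometry.angle u v) = ‖p‖ := by
    rw [Real.sin_eq_sqrt_one_sub_cos_sq (angle_nonneg u v) (angle_le_pi u v), cos_angle, hu, hv]
    rw [show (1:ℝ) - ((inner ℝ u v : ℝ) / (1 * 1)) ^ 2 = ‖p‖ ^ 2 by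
      rw [hnp, real_inner_comm u v]; ring]
    exact Real.sqrt_sq (norm_nonneg _)
  have hsb : Real.sin (InnerProductGeometry.angle w u) = ‖q‖ := by
    rw [Real.sin_eq_sqrt_one_sub_cos_sq (angle_nonneg w u) (angle_le_pi w u), cos_angle, hu, hw]
    rw [show (1:ℝ) - ((inner ℝ w u : ℝ) / (1 * 1)) ^ 2 = ‖q‖ ^ 2 by rw [hnq]; ring]
    exact Real.sqrt_sq (norm_nonneg _)
  rw [cos_angle v w, cos_angle w u, cos_angle u v, cos_angle p q, hu, hv, hw, hsb, hsc, hip]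
  have hpn : ‖p‖ ≠ 0 := norm_ne_zero_iff.mpr hp0
  have hqn : ‖q‖ ≠ 0 := norm_ne_zero_iff.mpr hq0
  rw [real_inner_comm u v]
  field_simp
  ring
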